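/- Let G be the set of homeomorphisms f: ℝ → ℝ such that f - id ∈ W^{1,∞}(ℝ), f⁻¹ - id ∈ W^{1,∞}(ℝ), and f' - 1 ∈ L²(ℝ). Then G is a group under composition. -/

import Mathlib

open MeasureTheory

lemma lip_self {f : ℝ → ℝ} {C : NNReal} (h : LipschitzWith C (fun x => f x - x)) :
    LipschitzWith (C + 1) f := by
  have := h.add LipschitzWith.id
  simpa using this

lemma lip_image_le {f : ℝ → ℝ} {C : NNReal} (h : LipschitzWith C f) (s : Set ℝ) :
    volume (f '' s) ≤ (C : ENNReal) * volume s := by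
  have h1 : volume (f '' s) = μH[1] (f '' s) := by rw [hausdorffMeasure_real]
  have h2 : (μH[1] : Measure ℝ) (f '' s) ≤ (C : ENNReal) ^ (1:ℝ) * μH[1] s :=
    h.hausdorffMeasure_image_le zero_le_one s
  rw [h1]
  refine h2.trans (le_of_eq ?_)
  rw [hausdorffMeasure_real, ENNReal.rpow_one]

lemma lip_null {f : ℝ → ℝ} {C : NNReal} (h : LipschitzWith C f) {s : Set ℝ}
    (hs : volume s = 0) : volume (f '' s) = 0 := by
  refine le_antisymm ((lip_image_le h s).trans ?_) (zero_le)
  rw [hs, mul_zero]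

lemma map_le {f : ℝ ≃ₜ ℝ} {C : NNReal} (h : LipschitzWith C f.symm) :
    Measure.map f volume ≤ (C : ENNReal) • volume := by
  rw [Measure.le_iff]
  intro s hs
  rw [Measure.map_apply f.measurable hs, Measure.smul_apply, smul_eq_mul]
  have : ⇑f ⁻¹' s = ⇑f.symm '' s := by
    ext x
    constructor
    · intro hx; exact ⟨f x, hx, f.symm_apply_apply x⟩
    · rintro ⟨y, hy, rfl⟩; simpa using hy
  rw [this]
  exact lip_image_le h s

lemma comp_memLp {f : ℝ ≃ₜ ℝ} {C : NNReal} (h : LipschitzWith C f.symm)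
    {u : ℝ → ℝ} (hu : MemLp u 2 volume) :
    MemLp (fun x => u (f x)) 2 volume := by
  have h1 : MemLp u 2 (Measure.map f volume) :=
    (hu.smul_measure (c := (C : ENNReal)) ENNReal.coe_ne_top).mono_measure (map_le h)
  exact h1.comp_of_map f.measurable.aemeasurable

lemma ae_diff_comp {f : ℝ ≃ₜ ℝ} {C : NNReal} (hsymm : LipschitzWith C f.symm)
    {g : ℝ → ℝ} {D : NNReal} (hg : LipschitzWith D g) :
    ∀ᵐ x, DifferentiableAt ℝ g (f x) := by
  have h0 : ∀ᵐ y, DifferentiableAt ℝ g y := hg.ae_differentiableAt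
  rw [ae_iff] at h0 ⊢
  refine measure_mono_null (fun x hx => ?_) (lip_null hsymm h0)
  exact ⟨f x, hx, f.symm_apply_apply x⟩

lemma ae_deriv_comp {f : ℝ ≃ₜ ℝ} {Cf Cs : NNReal} (hf : LipschitzWith Cf f)
    (hsymm : LipschitzWith Cs f.symm) {g : ℝ → ℝ} {D : NNReal} (hg : LipschitzWith D g) :
    ∀ᵐ x, deriv (g ∘ f) x = deriv g (f x) * deriv (⇑f) x := by
  filter_upwards [hf.ae_differentiableAt, ae_diff_comp hsymm hg] with x hfx hgx
  have := (hgx.hasDerivAt.comp x hfx.hasDerivAt).deriv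
  simpa using this

lemma ae_deriv_symm {f : ℝ ≃ₜ ℝ} {Cf Cs : NNReal} (hf : LipschitzWith Cf f)
    (hsymm : LipschitzWith Cs f.symm) :
    ∀ᵐ y, deriv (⇑f) (f.symm y) * deriv (⇑f.symm) y = 1 := by
  have h1 : ∀ᵐ y, DifferentiableAt ℝ (⇑f) (f.symm y) := by
    have h2 : LipschitzWith Cf (⇑f.symm.symm) := by simpa using hf
    exact ae_diff_comp (f := f.symm) h2 hf
  filter_upwards [hsymm.ae_differentiableAt, h1] with y hsy hfy
  have hcomp : HasDerivAt (⇑f ∘ ⇑f.symm) (deriv (⇑f) (f.symm y) * deriv (⇑f.symm) y) y :=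
    hfy.hasDerivAt.comp y hsy.hasDerivAt
  have hid : HasDerivAt (⇑f ∘ ⇑f.symm) 1 y := by
    have : (⇑f ∘ ⇑f.symm) = id := funext fun z => f.apply_symm_apply z
    rw [this]; simpa using hasDerivAt_id y

  exact hcomp.unique hid

lemma lipsub_comp {φ ψ : ℝ → ℝ} {Cφ Cψ : NNReal}
    (hφ : LipschitzWith Cφ fun x => φ x - x) (hψ : LipschitzWith Cψ fun x => ψ x - x) :
    ∃ C, LipschitzWith C (fun x => ψ (φ x) - x) := by
  refine ⟨Cψ * (Cφ + 1) + Cφ, ?_⟩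
  have h1 : LipschitzWith (Cψ * (Cφ + 1)) (fun x => ψ (φ x) - φ x) := hψ.comp (lip_self hφ)
  have h2 := h1.add hφ
  have heq : (fun x => ψ (φ x) - x) = fun x => (ψ (φ x) - φ x) + (φ x - x) := by
    funext x; ring
  rw [heq]; exact h2

lemma bddsub_comp {φ ψ : ℝ → ℝ}
    (hφ : BddAbove (Set.range fun x => |φ x - x|))
    (hψ : BddAbove (Set.range fun x => |ψ x - x|)) :
    BddAbove (Set.range fun x => |ψ (φ x) - x|) := by
  obtain ⟨Bφ, hBφ⟩ := hφ; obtain ⟨Bψ, hBψ⟩ := hψ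
  refine ⟨Bψ + Bφ, ?_⟩
  rintro _ ⟨x, rfl⟩
  have h1 : |ψ (φ x) - φ x| ≤ Bψ := hBψ (Set.mem_range_self (φ x))
  have h2 : |φ x - x| ≤ Bφ := hBφ (Set.mem_range_self x)
  calc |ψ (φ x) - x| ≤ |ψ (φ x) - φ x| + |φ x - x| := abs_sub_le _ _ _
    _ ≤ Bψ + Bφ := add_le_add h1 h2

/-- The relabeling set: homeomorphisms `f` of `ℝ` with `f - id` and
`f⁻¹ - id` in `W^{1,∞}(ℝ)` (bounded and Lipschitz) and `f' - 1 ∈ L²(ℝ)`. -/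
def RelabelGroup : Set (ℝ ≃ₜ ℝ) :=
  {f | (∃ C, LipschitzWith C (fun x => f x - x)) ∧
       BddAbove (Set.range fun x => |f x - x|) ∧
       (∃ C, LipschitzWith C (fun x => f.symm x - x)) ∧
       BddAbove (Set.range fun x => |f.symm x - x|) ∧
       MemLp (fun x => deriv (⇑f) x - 1) 2 volume}

/-- `G` is a group under composition: it contains the identity, and is closed
under composition and inversion. -/
theorem relabelGroup_is_group :
    (Homeomorph.refl ℝ) ∈ RelabelGroup ∧
    (∀ f g, f ∈ RelabelGroup → g ∈ RelabelGroup → f.trans g ∈ RelabelGroup) ∧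
    (∀ f, f ∈ RelabelGroup → f.symm ∈ RelabelGroup) := by
  refine ⟨?_, ?_, ?_⟩
  · -- identity
    have hz : (fun x : ℝ => (Homeomorph.refl ℝ) x - x) = fun _ => 0 := by
      funext x; simp
    have hz' : (fun x : ℝ => (Homeomorph.refl ℝ).symm x - x) = fun _ => 0 := by
      funext x; simp
    have hd : (fun x : ℝ => deriv (⇑(Homeomorph.refl ℝ)) x - 1) = fun _ => 0 := by
      funext x
      simp [Homeomorph.coe_refl]
    refine ⟨⟨0, ?_⟩, ?_, ⟨0, ?_⟩, ?_, ?_⟩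
    · rw [hz]; exact LipschitzWith.const 0
    · exact ⟨0, by rintro _ ⟨x, rfl⟩; simp⟩
    · rw [hz']; exact LipschitzWith.const 0
    · exact ⟨0, by rintro _ ⟨x, rfl⟩; simp⟩
    · rw [hd]; exact MemLp.zero'
  · -- composition
    rintro f g ⟨⟨Cf, hCf⟩, hBf, ⟨Cfs, hCfs⟩, hBfs, hL2f⟩ ⟨⟨Cg, hCg⟩, hBg, ⟨Cgs, hCgs⟩, hBgs, hL2g⟩
    have hLf : LipschitzWith (Cf + 1) ⇑f := lip_self hCf
    have hLg : LipschitzWith (Cg + 1) ⇑g := lip_self hCg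
    have hLfs : LipschitzWith (Cfs + 1) ⇑f.symm := lip_self hCfs
    have heq1 : (fun x => (f.trans g) x - x) = fun x => g (f x) - x := by
      funext x; simp
    have heq2 : (fun x => (f.trans g).symm x - x) = fun x => f.symm (g.symm x) - x := by
      funext x; simp
    refine ⟨?_, ?_, ?_, ?_, ?_⟩
    · rw [heq1]; exact lipsub_comp hCf hCg
    · have heq1b : (fun x => |(f.trans g) x - x|) = fun x => |g (f x) - x| := by
        funext x; simp
      rw [heq1b]; exact bddsub_comp hBf hBg
    · rw [heq2]; exact lipsub_comp hCgs hCfs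
    · have heq2b : (fun x => |(f.trans g).symm x - x|) = fun x => |f.symm (g.symm x) - x| := by
        funext x; simp
      rw [heq2b]; exact bddsub_comp hBgs hBfs
    · -- the L² condition for the composition
      have hcar := ae_deriv_comp hLf hLfs hLg
      have hterm1 : MemLp (fun x => (deriv ⇑g (f x) - 1) * deriv ⇑f x) 2 volume := by
        have hcomp : MemLp (fun x => deriv ⇑g (f x) - 1) 2 volume :=
          comp_memLp hLfs (u := fun y => deriv ⇑g y - 1) hL2g
        refine MemLp.of_le_mul (c := ((Cf + 1 : NNReal) : ℝ)) hcomp ?_ ?_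
        · exact ((((stronglyMeasurable_deriv ⇑g).comp_measurable f.measurable).sub
            stronglyMeasurable_const).mul (stronglyMeasurable_deriv ⇑f)).aestronglyMeasurable
        · refine Filter.Eventually.of_forall fun x => ?_
          have hb : ‖deriv ⇑f x‖ ≤ ((Cf + 1 : NNReal) : ℝ) := norm_deriv_le_of_lipschitz hLf
          calc ‖(deriv ⇑g (f x) - 1) * deriv ⇑f x‖
              = ‖deriv ⇑g (f x) - 1‖ * ‖deriv ⇑f x‖ := norm_mul _ _
            _ ≤ ‖deriv ⇑g (f x) - 1‖ * ((Cf + 1 : NNReal) : ℝ) :=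
                mul_le_mul_of_nonneg_left hb (norm_nonneg _)
            _ = ((Cf + 1 : NNReal) : ℝ) * ‖deriv ⇑g (f x) - 1‖ := mul_comm _ _
      have hsum := hterm1.add hL2f
      refine hsum.ae_eq ?_
      filter_upwards [hcar] with x hx
      have hco : deriv (⇑(f.trans g)) x = deriv (⇑g ∘ ⇑f) x := rfl
      rw [hco, hx]
      simp only [Pi.add_apply]
      ring
  · -- inversion
    rintro f ⟨⟨Cf, hCf⟩, hBf, ⟨Cfs, hCfs⟩, hBfs, hL2f⟩
    have hLf : LipschitzWith (Cf + 1) ⇑f := lip_self hCf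
    have hLfs : LipschitzWith (Cfs + 1) ⇑f.symm := lip_self hCfs
    refine ⟨⟨Cfs, hCfs⟩, hBfs, ⟨Cf, ?_⟩, ?_, ?_⟩
    · simpa using hCf
    · simpa using hBf
    · have hinv := ae_deriv_symm hLf hLfs
      have hss : LipschitzWith (Cf + 1) (⇑f.symm.symm) := by simpa using hLf
      have hcomp : MemLp (fun y => deriv ⇑f (f.symm y) - 1) 2 volume :=
        comp_memLp (f := f.symm) hss (u := fun y => deriv ⇑f y - 1) hL2f
      refine MemLp.of_le_mul (c := ((Cfs + 1 : NNReal) : ℝ)) hcomp ?_ ?_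
      · exact ((stronglyMeasurable_deriv ⇑f.symm).sub
          stronglyMeasurable_const).aestronglyMeasurable
      · filter_upwards [hinv] with y hy
        have hb : ‖deriv ⇑f.symm y‖ ≤ ((Cfs + 1 : NNReal) : ℝ) := norm_deriv_le_of_lipschitz hLfs
        have hmul : (deriv ⇑f (f.symm y) - 1) * deriv ⇑f.symm y = 1 - deriv ⇑f.symm y := by
          rw [sub_mul, one_mul, hy]
        have hkey : deriv ⇑f.symm y - 1 = -((deriv ⇑f (f.symm y) - 1) * deriv ⇑f.symm y) := by
          rw [hmul]; ring
        calc ‖deriv ⇑f.symm y - 1‖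
            = ‖(deriv ⇑f (f.symm y) - 1) * deriv ⇑f.symm y‖ := by rw [hkey, norm_neg]
          _ = ‖deriv ⇑f (f.symm y) - 1‖ * ‖deriv ⇑f.symm y‖ := norm_mul _ _
          _ ≤ ‖deriv ⇑f (f.symm y) - 1‖ * ((Cfs + 1 : NNReal) : ℝ) :=
              mul_le_mul_of_nonneg_left hb (norm_nonneg _)
          _ = ((Cfs + 1 : NNReal) : ℝ) * ‖deriv ⇑f (f.symm y) - 1‖ := mul_comm _ _
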